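/- Let p < q < r be primes, and let [v] denote, for an integer v, the unique u ∈ [0, q-1] such that there exists s ∈ ℤ with ([v]p + vq)r + q < i + 1 + spq ≤ ([v]p + vq)r + p + q (for a fixed integer i). Then for 0 ≤ u ≤ q-1: (a) χ_i(up + vq) = 1 if and only if u = [v]; (b) χ_i(up + vq) = -1 if and only if u = [v - r_p*], where r_p* is the inverse of r modulo p in [1, p-1]. -/
import Mathlib

private lemma chi_uniq (p q r : ℕ) (hp : 0 < p) (hq : q.Prime) (hr : r.Prime)
    (hqr : q < r) (c v u u' : ℤ)
    (hu : 0 ≤ u) (hu2 : u ≤ (q:ℤ) - 1) (hu' : 0 ≤ u') (hu'2 : u' ≤ (q:ℤ) - 1)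
    (h : ∃ s : ℤ, (u * p + v * q) * r < c + s * p * q ∧ c + s * p * q ≤ (u * p + v * q) * r + p)
    (h' : ∃ s : ℤ, (u' * p + v * q) * r < c + s * p * q ∧ c + s * p * q ≤ (u' * p + v * q) * r + p) :
    u = u' := by
  obtain ⟨s, hs1, hs2⟩ := h
  obtain ⟨s', hs1', hs2'⟩ := h'
  have hp0 : (0:ℤ) < p := by exact_mod_cast hp
  have hq0 : (0:ℤ) < q := by exact_mod_cast hq.pos
  set a := c + s * p * q - (u * p + v * q) * r with ha
  set a' := c + s' * p * q - (u' * p + v * q) * r with ha'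
  have ha1 : 1 ≤ a := by rw [ha]; linarith
  have ha2 : a ≤ p := by rw [ha]; linarith
  have ha1' : 1 ≤ a' := by rw [ha']; linarith
  have ha2' : a' ≤ p := by rw [ha']; linarith
  have hdvd : (p:ℤ) ∣ a - a' := ⟨(s - s') * q + (u' - u) * r, by rw [ha, ha']; ring⟩
  have haa : a - a' = 0 := Int.eq_zero_of_abs_lt_dvd hdvd (by rw [abs_lt]; omega)
  have hkey : (u - u') * r = (s - s') * q := by
    have h0 : ((s - s') * q + (u' - u) * r) * p = 0 := by
      rw [ha, ha'] at haa; linear_combination haa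
    rcases mul_eq_zero.mp h0 with h1 | h1
    · linarith
    · linarith
  have hqdvd : (q:ℤ) ∣ (u - u') * r := ⟨s - s', by rw [hkey]; ring⟩
  have hqprime : Prime (q:ℤ) := Nat.prime_iff_prime_int.mp hq
  have hq2 := hq.two_le
  have hdvd2 : (q:ℤ) ∣ (u - u') := by
    rcases hqprime.dvd_mul.mp hqdvd with h1 | h1
    · exact h1
    · exfalso
      have h3 : q ∣ r := by exact_mod_cast h1
      rcases (Nat.Prime.eq_one_or_self_of_dvd hr q h3) with h2 | h2 <;> omega
  have := Int.eq_zero_of_abs_lt_dvd hdvd2 (by rw [abs_lt]; omega)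
  omega

private lemma chi_excl (p q r : ℕ) (hp : 2 ≤ p) (hpq : p < q) (m i : ℤ)
    (h1 : ∃ s : ℤ, m * r + q < i + 1 + s * p * q ∧ i + 1 + s * p * q ≤ m * r + q + p)
    (h2 : ∃ s : ℤ, m * r < i + 1 + s * p * q ∧ i + 1 + s * p * q ≤ m * r + p) : False := by
  obtain ⟨s, hs1, hs2⟩ := h1
  obtain ⟨s', hs1', hs2'⟩ := h2
  have hp0 : (2:ℤ) ≤ p := by exact_mod_cast hp
  have hq0 : (p:ℤ) < q := by exact_mod_cast hpq
  set a := i + 1 + s * p * q - m * r - q with ha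
  set b := i + 1 + s' * p * q - m * r with hb
  have ha1 : 1 ≤ a := by rw [ha]; linarith
  have ha2 : a ≤ p := by rw [ha]; linarith
  have hb1 : 1 ≤ b := by rw [hb]; linarith
  have hb2 : b ≤ p := by rw [hb]; linarith
  have hk : (s' - s) * ((p:ℤ) * q) = b - a - q := by rw [ha, hb]; ring
  have hpqbig : (p:ℤ) + q - 1 < (p:ℤ) * q := by nlinarith
  rcases le_or_gt 0 (s' - s) with h | h
  · have : 0 ≤ (s' - s) * ((p:ℤ) * q) := mul_nonneg h (by positivity)
    omega
  · have h1 : s' - s ≤ -1 := by omega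
    have : (s' - s) * ((p:ℤ) * q) ≤ -1 * ((p:ℤ) * q) :=
      mul_le_mul_of_nonneg_right h1 (by positivity)
    nlinarith

open Classical in
/-- The function `χ_i(m)` associated to primes `p < q < r`. -/
noncomputable def chi (p q r : ℕ) (i m : ℤ) : ℤ :=
  if ∃ s : ℤ, m * r + q < i + 1 + s * p * q ∧ i + 1 + s * p * q ≤ m * r + q + p then 1
  else if ∃ s : ℤ, m * r < i + 1 + s * p * q ∧ i + 1 + s * p * q ≤ m * r + p then -1
  else 0

/-- Let `p < q < r` be primes and `i` a fixed integer. Suppose `u₀ = [v]` and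
`u₁ = [v - r_p*]`, where `[w]` is the unique `u ∈ [0, q-1]` such that
`(u p + w q) r + q < i + 1 + s p q ≤ (u p + w q) r + p + q` for some `s ∈ ℤ`,
and `rs = r_p*` is the inverse of `r` mod `p` in `[1, p-1]`. Then for `0 ≤ u ≤ q-1`:
(a) `χ_i(up + vq) = 1 ↔ u = [v]`; (b) `χ_i(up + vq) = -1 ↔ u = [v - r_p*]`. -/
theorem stmt_10 (p q r : ℕ) (hp : p.Prime) (hq : q.Prime) (hr : r.Prime)
    (hpq : p < q) (hqr : q < r) (i v : ℤ) (rs : ℕ)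
    (hrs1 : 1 ≤ rs) (hrs2 : rs ≤ p - 1) (hrs : r * rs ≡ 1 [MOD p])
    (u₀ u₁ : ℤ)
    (hu₀ : 0 ≤ u₀ ∧ u₀ ≤ q - 1 ∧ ∃ s : ℤ,
      (u₀ * p + v * q) * r + q < i + 1 + s * p * q ∧
      i + 1 + s * p * q ≤ (u₀ * p + v * q) * r + p + q)
    (hu₁ : 0 ≤ u₁ ∧ u₁ ≤ q - 1 ∧ ∃ s : ℤ,
      (u₁ * p + (v - rs) * q) * r + q < i + 1 + s * p * q ∧
      i + 1 + s * p * q ≤ (u₁ * p + (v - rs) * q) * r + p + q) :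
    ∀ u : ℤ, 0 ≤ u → u ≤ q - 1 →
      ((chi p q r i (u * p + v * q) = 1 ↔ u = u₀) ∧
       (chi p q r i (u * p + v * q) = -1 ↔ u = u₁)) := by
  obtain ⟨hu₀0, hu₀1, s₀, hs₀1, hs₀2⟩ := hu₀
  obtain ⟨hu₁0, hu₁1, s₁, hs₁1, hs₁2⟩ := hu₁
  have hdvd := hrs.dvd
  push_cast at hdvd
  obtain ⟨t, ht⟩ := hdvd
  -- ht : 1 - r * rs = p * t
  -- canonical condition for u₀ (with c = i + 1 - q)
  have hA₀ : ∃ s : ℤ, (u₀ * p + v * q) * r < (i + 1 - q) + s * p * q ∧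
      (i + 1 - q) + s * p * q ≤ (u₀ * p + v * q) * r + p :=
    ⟨s₀, by linarith, by linarith⟩
  -- canonical condition for u₁ (with c = i + 1)
  have key : ((u₁:ℤ) * p + (v - rs) * q) * r + q = (u₁ * p + v * q) * r + p * t * q := by
    linear_combination (q : ℤ) * ht
  have hB₁ : ∃ s : ℤ, (u₁ * (p:ℤ) + v * q) * r < (i + 1) + s * p * q ∧
      (i + 1) + s * p * q ≤ (u₁ * p + v * q) * r + p := by
    refine ⟨s₁ - t, ?_, ?_⟩
    · have e : (i:ℤ) + 1 + (s₁ - t) * p * q = i + 1 + s₁ * p * q - p * t * q := by ring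
      rw [e]; linarith
    · have e : (i:ℤ) + 1 + (s₁ - t) * p * q = i + 1 + s₁ * p * q - p * t * q := by ring
      rw [e]; linarith
  intro u h0u h1u
  -- condition 1 iff u = u₀
  have cond1_iff : (∃ s : ℤ, (u * p + v * q) * r + q < i + 1 + s * p * q ∧
      i + 1 + s * p * q ≤ (u * p + v * q) * r + q + p) ↔ u = u₀ := by
    constructor
    · rintro ⟨s, h1, h2⟩
      exact chi_uniq p q r hp.pos hq hr hqr (i + 1 - q) v u u₀ h0u h1u hu₀0 hu₀1
        ⟨s, by linarith, by linarith⟩ hA₀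
    · rintro rfl
      exact ⟨s₀, by linarith, by linarith⟩
  -- condition 2 iff u = u₁
  have cond2_iff : (∃ s : ℤ, (u * p + v * q) * r < i + 1 + s * p * q ∧
      i + 1 + s * p * q ≤ (u * p + v * q) * r + p) ↔ u = u₁ := by
    constructor
    · rintro ⟨s, h1, h2⟩
      exact chi_uniq p q r hp.pos hq hr hqr (i + 1) v u u₁ h0u h1u hu₁0 hu₁1
        ⟨s, h1, h2⟩ hB₁
    · rintro rfl
      exact hB₁
  constructor
  · rw [← cond1_iff]
    unfold chi
    split_ifs with hA hB
    · exact iff_of_true rfl hA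
    · exact iff_of_false (by norm_num) hA
    · exact iff_of_false (by norm_num) hA
  · rw [← cond2_iff]
    unfold chi
    split_ifs with hA hB
    · exact iff_of_false (by norm_num)
        (fun hB => chi_excl p q r hp.two_le hpq (u * p + v * q) i hA hB)
    · exact iff_of_true rfl hB
    · exact iff_of_false (by norm_num) hB
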